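/- arXiv:1712.09136 — 5 statements merged into one kernel-verified Lean document; each statement's English description precedes it below -/
import Mathlib

section
/- Suppose ε ≥ 0, δ > 1, and p, q, p₀, q₀ are positive reals with e^{−ε} ≤ p₀/q₀ ≤ e^{ε}, and with p ≤ γ·q and p ≥ γ^{−1}·q where γ = max(δ, p₀/q₀, q₀/p₀). Then, setting ε' = max(ε, log δ), we have e^{−ε'} ≤ p/q ≤ e^{ε'}. -/
theorem stmt4 (ε δ p q p₀ q₀ : ℝ) (hε : 0 ≤ ε) (hδ : 1 < δ)
    (hp : 0 < p) (hq : 0 < q) (hp₀ : 0 < p₀) (hq₀ : 0 < q₀)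
    (hlo : Real.exp (-ε) ≤ p₀ / q₀) (hhi : p₀ / q₀ ≤ Real.exp ε)
    (hup : p ≤ max δ (max (p₀ / q₀) (q₀ / p₀)) * q)
    (hdn : p ≥ (max δ (max (p₀ / q₀) (q₀ / p₀)))⁻¹ * q) :
    Real.exp (-(max ε (Real.log δ))) ≤ p / q ∧ p / q ≤ Real.exp (max ε (Real.log δ)) := by
  set γ := max δ (max (p₀ / q₀) (q₀ / p₀)) with hγ
  set ε' := max ε (Real.log δ) with hε'
  have hq₀p₀ : q₀ / p₀ ≤ Real.exp ε := by
    have h1 : q₀ / p₀ = (p₀ / q₀)⁻¹ := by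
      field_simp
    rw [h1]
    calc (p₀ / q₀)⁻¹ ≤ (Real.exp (-ε))⁻¹ := by
          apply inv_anti₀ (Real.exp_pos _) hlo
      _ = Real.exp ε := by rw [← Real.exp_neg, neg_neg]
  have hγle : γ ≤ Real.exp ε' := by
    apply max_le
    · calc δ = Real.exp (Real.log δ) := (Real.exp_log (by linarith)).symm
        _ ≤ Real.exp ε' := Real.exp_le_exp.mpr (le_max_right _ _)
    · apply max_le
      · exact hhi.trans (Real.exp_le_exp.mpr (le_max_left _ _))
      · exact hq₀p₀.trans (Real.exp_le_exp.mpr (le_max_left _ _))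
  have hγpos : 0 < γ := lt_of_lt_of_le (by linarith) (le_max_left _ _)
  constructor
  · rw [Real.exp_neg]
    calc (Real.exp ε')⁻¹ ≤ γ⁻¹ := inv_anti₀ hγpos hγle
      _ ≤ p / q := by
          rw [le_div_iff₀ hq]; exact hdn
  · rw [div_le_iff₀ hq]
    calc p ≤ γ * q := hup
      _ ≤ Real.exp ε' * q := by nlinarith
end

section
/- Let m ≥ 1 and n > 1 be natural numbers, let y-counts n_y ≥ 2 for the target label, and let a_1,…,a_m with 2 ≤ a_i ≤ n_y. Then the product ∏_{i=1}^m [a_i(n_y−1)/(n_y(a_i−1))] · [n_y(n−1)/(n(n_y−1))] ≥ 1, where all divisions are real. -/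
theorem stmt8 (m n ny : ℕ) (hm : 1 ≤ m) (hn : 1 < n) (hny : 2 ≤ ny) (hnyn : ny ≤ n)
    (a : Fin m → ℕ) (ha : ∀ i, 2 ≤ a i) (ha' : ∀ i, a i ≤ ny) :
    (∏ i, ((a i : ℝ) * ((ny : ℝ) - 1)) / ((ny : ℝ) * ((a i : ℝ) - 1))) *
      (((ny : ℝ) * ((n : ℝ) - 1)) / ((n : ℝ) * ((ny : ℝ) - 1))) ≥ 1 := by
  have hnyR : (2 : ℝ) ≤ (ny : ℝ) := by exact_mod_cast hny
  have hnR : (1 : ℝ) < (n : ℝ) := by exact_mod_cast hn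
  have hnynR : (ny : ℝ) ≤ (n : ℝ) := by exact_mod_cast hnyn
  have h1 : (1 : ℝ) ≤ ∏ i, ((a i : ℝ) * ((ny : ℝ) - 1)) / ((ny : ℝ) * ((a i : ℝ) - 1)) := by
    have : (1:ℝ) = ∏ _i : Fin m, (1:ℝ) := by simp
    rw [this]
    apply Finset.prod_le_prod (fun i _ => zero_le_one)
    intro i _
    have haR : (2 : ℝ) ≤ (a i : ℝ) := by exact_mod_cast ha i
    have ha'R : (a i : ℝ) ≤ (ny : ℝ) := by exact_mod_cast ha' i
    rw [one_le_div (by nlinarith)]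
    nlinarith
  have h2 : (1 : ℝ) ≤ ((ny : ℝ) * ((n : ℝ) - 1)) / ((n : ℝ) * ((ny : ℝ) - 1)) := by
    rw [one_le_div (by nlinarith)]
    nlinarith
  nlinarith
end

section
/- Let m ≥ 1, n ≥ 2 be natural numbers and n_min ≥ 2. Then for any natural number n_y with n_min ≤ n_y ≤ n, we have ((n_y − 1)/n_y)^m · (n_y/(n_y − 1)) · ((n−1)/n) ≥ [ (n_min/(n_min − 1))^{m−1} · (n/(n−1)) ]^{−1}, where all divisions are real. -/
theorem stmt9 (m n nmin ny : ℕ) (hm : 1 ≤ m) (hn : 2 ≤ n) (hnmin : 2 ≤ nmin)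
    (h1 : nmin ≤ ny) (h2 : ny ≤ n) :
    (((ny : ℝ) - 1) / (ny : ℝ)) ^ m * ((ny : ℝ) / ((ny : ℝ) - 1)) * (((n : ℝ) - 1) / (n : ℝ)) ≥
      (((nmin : ℝ) / ((nmin : ℝ) - 1)) ^ (m - 1) * ((n : ℝ) / ((n : ℝ) - 1)))⁻¹ := by
  have hny2 : 2 ≤ ny := hnmin.trans h1
  have hnyR : (2:ℝ) ≤ (ny:ℝ) := by exact_mod_cast hny2
  have hnR : (2:ℝ) ≤ (n:ℝ) := by exact_mod_cast hn
  have hminR : (2:ℝ) ≤ (nmin:ℝ) := by exact_mod_cast hnmin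
  have hny1 : (0:ℝ) < (ny:ℝ) - 1 := by linarith
  have hny0 : (0:ℝ) < (ny:ℝ) := by linarith
  have hn1 : (0:ℝ) < (n:ℝ) - 1 := by linarith
  have hn0 : (0:ℝ) < (n:ℝ) := by linarith
  have hmin1 : (0:ℝ) < (nmin:ℝ) - 1 := by linarith
  have hmin0 : (0:ℝ) < (nmin:ℝ) := by linarith
  obtain ⟨k, rfl⟩ : ∃ k, m = k + 1 := ⟨m - 1, (Nat.succ_pred_eq_of_pos hm).symm⟩
  simp only [Nat.add_sub_cancel]
  have e1 : (((ny : ℝ) - 1) / (ny : ℝ)) ^ (k+1) * ((ny : ℝ) / ((ny : ℝ) - 1)) =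
      (((ny : ℝ) - 1) / (ny : ℝ)) ^ k := by
    rw [pow_succ]
    field_simp
  rw [e1, mul_inv, ← inv_pow, inv_div, inv_div]
  gcongr ?_ ^ k * _
  · rw [div_le_div_iff₀ hmin0 hny0]
    have h1R : (nmin:ℝ) ≤ (ny:ℝ) := by exact_mod_cast h1
    nlinarith
end

section
/- There exists a classification algorithm A (a map from finite datasets to classifiers returning probabilities) and a dataset T with a record t ∈ T such that the predictions of A(T) and A(T∖{t}) agree exactly on the query x^(t) (so the PDTP of t is 0), yet there exists another query x ≠ x^(t) on which the predictions of A(T) and A(T∖{t}) differ maximally (probability 1 versus 0). In particular, PDTP does not upper-bound DTP for arbitrary classifiers. -/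
theorem stmt11 :
    ∃ (A : Finset (ℝ × Bool) → ℝ → Bool → ℝ),
      (∀ (S : Finset (ℝ × Bool)) (x : ℝ),
        (∀ y, 0 ≤ A S x y) ∧ (∑ y : Bool, A S x y) = 1) ∧
      ∃ (T : Finset (ℝ × Bool)) (t : ℝ × Bool), t ∈ T ∧
        (∀ y, A T t.1 y = A (T.erase t) t.1 y) ∧
        ∃ (x : ℝ) (y : Bool), x ≠ t.1 ∧ A T x y = 1 ∧ A (T.erase t) x y = 0 := by
  refine ⟨fun S x y => if (x = 0 ∧ (1, true) ∈ S) = (y = true) then 1 else 0, ?_, ?_⟩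
  · intro S x
    constructor
    · intro y; positivity
    · simp [Fintype.sum_bool]
      by_cases h : x = 0 ∧ (1, true) ∈ S <;> simp [h] <;> decide
  · refine ⟨{(1, true)}, (1, true), by simp, ?_, 0, true, by norm_num, ?_, ?_⟩
    · intro y; norm_num
    · norm_num
    · norm_num
end

section
/- The 1-nearest-neighbor classification algorithm is not δ-training stable for any δ > 1: there exist a finite training set T ⊆ ℝ × Y (with |Y| = 2), a record t ∈ T, and a query point x' such that p_{A(T)}(y^(t)|x^(t)) = p_{A(T∖{t})}(y^(t)|x^(t)) = 1 (ratio 1 on the target's own query) while p_{A(T)}(y'|x') = 1 and p_{A(T∖{t})}(y'|x') = 0 for some label y'. -/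
/-- The 1-nearest-neighbor prediction: probability `1` for label `y` on query `x`
if some point of `T` with label `y` is (weakly) closest to `x`, else `0`. -/
noncomputable def nnPred (T : Finset (ℝ × Bool)) (x : ℝ) (y : Bool) : ℝ :=
  open Classical in
  if ∃ z ∈ T, z.2 = y ∧ ∀ w ∈ T, |x - z.1| ≤ |x - w.1| then 1 else 0

theorem stmt12 :
    ∃ (T : Finset (ℝ × Bool)) (t : ℝ × Bool) (x' : ℝ) (y' : Bool), t ∈ T ∧
      nnPred T t.1 t.2 = 1 ∧ nnPred (T.erase t) t.1 t.2 = 1 ∧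
      nnPred T x' y' = 1 ∧ nnPred (T.erase t) x' y' = 0 := by
  refine ⟨{(0, false), (1, false), (4, true)}, (1, false), 2.5, false, ?_, ?_, ?_, ?_, ?_⟩
  · simp
  · rw [nnPred, if_pos]
    refine ⟨(1, false), by simp, rfl, ?_⟩
    intro w hw
    simp only [Finset.mem_insert, Finset.mem_singleton] at hw
    rcases hw with h | h | h <;> subst h <;> norm_num [abs, max_le_iff, le_max_iff]
  · rw [nnPred, if_pos]
    refine ⟨(0, false), by simp, rfl, ?_⟩
    intro w hw
    simp only [Finset.mem_erase, Finset.mem_insert, Finset.mem_singleton] at hw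
    rcases hw with ⟨hne, h | h | h⟩ <;> first | (exact absurd h hne) | (subst h; norm_num)
  · rw [nnPred, if_pos]
    refine ⟨(1, false), by simp, rfl, ?_⟩
    intro w hw
    simp only [Finset.mem_insert, Finset.mem_singleton] at hw
    rcases hw with h | h | h <;> subst h <;> norm_num [abs, max_le_iff, le_max_iff]
  · rw [nnPred, if_neg]
    rintro ⟨z, hz, hz2, hle⟩
    have h4 := hle (4, true) (by simp)
    simp only [Finset.mem_erase, Finset.mem_insert, Finset.mem_singleton] at hz
    rcases hz with ⟨hne, h | h | h⟩
    · subst h; norm_num [abs, max_le_iff, le_max_iff] at h4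
    · exact hne h
    · subst h; simp at hz2
end
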